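/- Let C be a non-redundant two-layer comparator network on n channels such that for every pair of distinct channels i, j, neither of which is used by a comparator of the second layer of C and which are not joined to each other by a first-layer comparator, the following hold: (i) both i and j are used by comparators of the first layer; (ii) i and j are both min-channels or both max-channels; and (iii) the channel joined to i by a first-layer comparator and the channel joined to j by a first-layer comparator are not joined to each other by a second-layer comparator. Then C is saturated. -/

import Mathlib

namespace SN

open scoped Classical

/-- A comparator on `n` channels: a pair of channels. -/
abbrev Comp (n : ℕ) := Fin n × Fin n

/-- A layer is a finite set of comparators. -/
abbrev Layer (n : ℕ) := Finset (Comp n)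

/-- A comparator network is a sequence (list) of layers; its depth is the length. -/
abbrev Net (n : ℕ) := List (Layer n)

/-- Each channel is used by at most one comparator of the layer. -/
def NoOverlap {n : ℕ} (L : Layer n) : Prop :=
  ∀ c ∈ L, ∀ c' ∈ L, c ≠ c' →
    c.1 ≠ c'.1 ∧ c.1 ≠ c'.2 ∧ c.2 ≠ c'.1 ∧ c.2 ≠ c'.2

/-- A (standard) layer: comparators `(i,j)` with `i < j`, channels pairwise disjoint. -/
def IsLayer {n : ℕ} (L : Layer n) : Prop :=
  (∀ c ∈ L, c.1 < c.2) ∧ NoOverlap L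

/-- A generalized layer: comparators `(i,j)` with `i ≠ j` allowed in any order. -/
def IsGenLayer {n : ℕ} (L : Layer n) : Prop :=
  (∀ c ∈ L, c.1 ≠ c.2) ∧ NoOverlap L

def IsNet {n : ℕ} (C : Net n) : Prop := ∀ L ∈ C, IsLayer L

def IsGenNet {n : ℕ} (C : Net n) : Prop := ∀ L ∈ C, IsGenLayer L

/-- Apply one layer to a Boolean vector: a comparator `(i,j)` puts the min
(`&&`) on channel `i` and the max (`||`) on channel `j`. -/
noncomputable def applyLayer {n : ℕ} (L : Layer n) (x : Fin n → Bool) : Fin n → Bool :=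
  fun k =>
    if h1 : ∃ c ∈ L, c.1 = k then x h1.choose.1 && x h1.choose.2
    else if h2 : ∃ c ∈ L, c.2 = k then x h2.choose.1 || x h2.choose.2
    else x k

/-- Run a comparator network on a Boolean input (layers applied in sequence). -/
noncomputable def run {n : ℕ} (C : Net n) (x : Fin n → Bool) : Fin n → Bool :=
  C.foldl (fun y L => applyLayer L y) x

/-- Ascendingly sorted Boolean vector. -/
def BSorted {n : ℕ} (x : Fin n → Bool) : Prop :=
  ∀ i j : Fin n, i ≤ j → x i ≤ x j

/-- A sorting network: a comparator network sorting every Boolean input. -/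
def IsSortingNet {n : ℕ} (C : Net n) : Prop :=
  IsNet C ∧ ∀ x : Fin n → Bool, BSorted (run C x)

/-- The set of outputs of a network on all Boolean inputs. -/
def outputs {n : ℕ} (C : Net n) : Set (Fin n → Bool) := Set.range (run C)

/-- Apply one layer to a vector of naturals. -/
noncomputable def applyLayerN {n : ℕ} (L : Layer n) (x : Fin n → ℕ) : Fin n → ℕ :=
  fun k =>
    if h1 : ∃ c ∈ L, c.1 = k then min (x h1.choose.1) (x h1.choose.2)
    else if h2 : ∃ c ∈ L, c.2 = k then max (x h2.choose.1) (x h2.choose.2)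
    else x k

noncomputable def runN {n : ℕ} (C : Net n) (x : Fin n → ℕ) : Fin n → ℕ :=
  C.foldl (fun y L => applyLayerN L y) x

def NSorted {n : ℕ} (x : Fin n → ℕ) : Prop :=
  ∀ i j : Fin n, i ≤ j → x i ≤ x j

/-- Permute the coordinates of a Boolean vector by `π` (channel `k`'s value
moves to channel `π k`). -/
def permVec {n : ℕ} (π : Equiv.Perm (Fin n)) (x : Fin n → Bool) : Fin n → Bool :=
  fun i => x (π.symm i)

/-- The image of a set of Boolean vectors under coordinate permutation by `π`. -/
def permSet {n : ℕ} (π : Equiv.Perm (Fin n)) (X : Set (Fin n → Bool)) :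
    Set (Fin n → Bool) :=
  permVec π '' X

/-- The image `π(L)` of a layer under a permutation of channels. -/
def permLayer {n : ℕ} (π : Equiv.Perm (Fin n)) (L : Layer n) : Layer n :=
  L.image fun c => (π c.1, π c.2)

/-- Channel `i` is used by some comparator of the layer `L`. -/
def usedIn {n : ℕ} (L : Layer n) (i : Fin n) : Prop := ∃ c ∈ L, c.1 = i ∨ c.2 = i

/-- Channels `i` and `j` are joined by a comparator of `L`. -/
def Joined {n : ℕ} (L : Layer n) (i j : Fin n) : Prop := (i, j) ∈ L ∨ (j, i) ∈ L

/-- `i` is the smaller channel of some comparator of `L` (a min-channel). -/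
def MinChan {n : ℕ} (L : Layer n) (i : Fin n) : Prop := ∃ c ∈ L, c.1 = i

/-- `i` is the larger channel of some comparator of `L` (a max-channel). -/
def MaxChan {n : ℕ} (L : Layer n) (i : Fin n) : Prop := ∃ c ∈ L, c.2 = i

/-- A two-layer network `[L1, L2]` is redundant if some comparator can be removed
so that the outputs of the result are a permutation of the original outputs. -/
def Redundant {n : ℕ} (L1 L2 : Layer n) : Prop :=
  ∃ π : Equiv.Perm (Fin n),
    (∃ c ∈ L1, outputs [L1.erase c, L2] = permSet π (outputs [L1, L2])) ∨
    (∃ c ∈ L2, outputs [L1, L2.erase c] = permSet π (outputs [L1, L2]))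

/-- A two-layer network `[L1, L2]` is saturated if it is non-redundant and no
comparator on two channels unused in the second layer can be added to the second
layer so as to make the output set a proper subset of a permutation of the
original output set. -/
def Saturated {n : ℕ} (L1 L2 : Layer n) : Prop :=
  ¬ Redundant L1 L2 ∧
  ¬ ∃ (c : Comp n) (π : Equiv.Perm (Fin n)),
      c.1 < c.2 ∧ ¬ usedIn L2 c.1 ∧ ¬ usedIn L2 c.2 ∧
      outputs [L1, insert c L2] ⊂ permSet π (outputs [L1, L2])

/-- Vertices of the graph representation of `C`: the comparators of `C`,
tagged with the index of the layer containing them. -/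
def Vertex {n : ℕ} (C : Net n) := {p : ℕ × Comp n // p.2 ∈ C.getD p.1 ∅}

/-- The channel carrying the min output (`b = false`, label 1) or max output
(`b = true`, label 2) of a comparator. -/
def outChan {n : ℕ} (c : Comp n) (b : Bool) : Fin n := if b then c.2 else c.1

/-- An edge with label `b` (1 for min, 2 for max) from comparator `u` to
comparator `v`: the corresponding output of `u` is an input of `v`, i.e. `v`
is the next comparator on that channel. -/
def Edge {n : ℕ} (C : Net n) (b : Bool) (u v : ℕ × Comp n) : Prop :=
  u.1 < v.1 ∧ (outChan u.2 b = v.2.1 ∨ outChan u.2 b = v.2.2) ∧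
  ∀ m, u.1 < m → m < v.1 → ¬ usedIn (C.getD m ∅) (outChan u.2 b)

/-- The graph representations of `C` and `D` are isomorphic: a bijection of
comparators preserving the labeled edges. -/
def GraphIso {n m : ℕ} (C : Net n) (D : Net m) : Prop :=
  ∃ f : Vertex C ≃ Vertex D,
    ∀ (b : Bool) (u v : Vertex C),
      Edge C b u.val v.val ↔ Edge D b (f u).val (f v).val

/-- The graph representation of `C` is connected. -/
def GraphConnected {n : ℕ} (C : Net n) : Prop :=
  ∀ u v : Vertex C,
    Relation.ReflTransGen
      (fun a b : Vertex C => ∃ ℓ : Bool, Edge C ℓ a.val b.val ∨ Edge C ℓ b.val a.val) u v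

/-- Reflection of a comparator: `(i,j) ↦ (n-j+1, n-i+1)` (in 1-based terms). -/
def reflectComp {n : ℕ} (c : Comp n) : Comp n := (c.2.rev, c.1.rev)

def reflectLayer {n : ℕ} (L : Layer n) : Layer n := L.image reflectComp

/-- Reflection `C^R` of a comparator network. -/
def reflect {n : ℕ} (C : Net n) : Net n := C.map reflectLayer

/-- The first layer `F_n = {(2i-1, 2i) : 1 ≤ i ≤ ⌊n/2⌋}` (0-indexed: `(2i, 2i+1)`). -/
def FLayer (n : ℕ) : Layer n :=
  Finset.univ.filter fun c : Comp n => c.1.val % 2 = 0 ∧ c.2.val = c.1.val + 1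

/-- The two-layer networks with first layer `F_n`, parametrized by second layer. -/
def SecondLayers (n : ℕ) := {L : Layer n // IsLayer L}

/-- The number `|R(G_n)|` of equivalence classes of two-layer networks with
first layer `F_n`, under graph isomorphism `≈`. -/
noncomputable def numClasses (n : ℕ) : ℕ :=
  Nat.card (Quot fun L L' : SecondLayers n =>
    GraphIso ([FLayer n, L.val] : Net n) ([FLayer n, L'.val] : Net n))

/-- Redundant two-layer networks with first layer `F_n`. -/
def RedLayers (n : ℕ) := {L : Layer n // IsLayer L ∧ Redundant (FLayer n) L}

/-- The number of equivalence classes of redundant two-layer networks with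
first layer `F_n`, under graph isomorphism `≈`. -/
noncomputable def numRedClasses (n : ℕ) : ℕ :=
  Nat.card (Quot fun L L' : RedLayers n =>
    GraphIso ([FLayer n, L.val] : Net n) ([FLayer n, L'.val] : Net n))

/- ===== Auxiliary development for Statement 12 ===== -/

section Aux
variable {n : ℕ}

lemma eval_min {L : Layer n} (hL : NoOverlap L) {d : Comp n} (hd : d ∈ L)
    (x : Fin n → Bool) : applyLayer L x d.1 = (x d.1 && x d.2) := by
  have h1 : ∃ c ∈ L, c.1 = d.1 := ⟨d, hd, rfl⟩
  rw [applyLayer, dif_pos h1]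
  obtain ⟨hc, hc1⟩ := h1.choose_spec
  have hcd : h1.choose = d := by
    by_contra hne
    exact (hL _ hc _ hd hne).1 hc1
  rw [hcd]

lemma eval_max {L : Layer n} (hL : NoOverlap L) {d : Comp n} (hd : d ∈ L)
    (hne : d.1 ≠ d.2) (x : Fin n → Bool) :
    applyLayer L x d.2 = (x d.1 || x d.2) := by
  have h1 : ¬ ∃ c ∈ L, c.1 = d.2 := by
    rintro ⟨c, hc, hc1⟩
    by_cases hcd : c = d
    · exact hne (hcd ▸ hc1)
    · exact (hL _ hc _ hd hcd).2.1 hc1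
  have h2 : ∃ c ∈ L, c.2 = d.2 := ⟨d, hd, rfl⟩
  rw [applyLayer, dif_neg h1, dif_pos h2]
  obtain ⟨hc, hc2⟩ := h2.choose_spec
  have hcd : h2.choose = d := by
    by_contra hne'
    exact (hL _ hc _ hd hne').2.2.2 hc2
  rw [hcd]

lemma eval_id {L : Layer n} {k : Fin n} (h : ¬ usedIn L k) (x : Fin n → Bool) :
    applyLayer L x k = x k := by
  have h1 : ¬ ∃ c ∈ L, c.1 = k := fun ⟨c, hc, hh⟩ => h ⟨c, hc, Or.inl hh⟩
  have h2 : ¬ ∃ c ∈ L, c.2 = k := fun ⟨c, hc, hh⟩ => h ⟨c, hc, Or.inr hh⟩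
  rw [applyLayer, dif_neg h1, dif_neg h2]

lemma noOverlap_mono {L L' : Layer n} (hss : L ⊆ L') (h : NoOverlap L') :
    NoOverlap L := fun c hc c' hc' hne => h c (hss hc) c' (hss hc') hne

lemma run_two (L1 L2 : Layer n) (x : Fin n → Bool) :
    run [L1, L2] x = applyLayer L2 (applyLayer L1 x) := rfl

lemma noOverlap_insert {L : Layer n} {c : Comp n} (hL : NoOverlap L)
    (hi : ¬ usedIn L c.1) (hj : ¬ usedIn L c.2) : NoOverlap (insert c L) := by
  intro a ha b hb hne
  rcases Finset.mem_insert.1 ha with ha' | ha' <;>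
    rcases Finset.mem_insert.1 hb with hb' | hb'
  · exact absurd (ha'.trans hb'.symm) hne
  · subst ha'
    refine ⟨fun hh => hi ⟨b, hb', Or.inl hh.symm⟩, fun hh => hi ⟨b, hb', Or.inr hh.symm⟩,
      fun hh => hj ⟨b, hb', Or.inl hh.symm⟩, fun hh => hj ⟨b, hb', Or.inr hh.symm⟩⟩
  · subst hb'
    refine ⟨fun hh => hi ⟨a, ha', Or.inl hh⟩, fun hh => hj ⟨a, ha', Or.inl hh⟩,
      fun hh => hi ⟨a, ha', Or.inr hh⟩, fun hh => hj ⟨a, ha', Or.inr hh⟩⟩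
  · exact hL a ha' b hb' hne

lemma usedIn_insert {L : Layer n} {c : Comp n} {k : Fin n} :
    usedIn (insert c L) k ↔ (c.1 = k ∨ c.2 = k) ∨ usedIn L k := by
  constructor
  · rintro ⟨e, he, hh⟩
    rcases Finset.mem_insert.1 he with rfl | he'
    · exact Or.inl hh
    · exact Or.inr ⟨e, he', hh⟩
  · rintro (hh | ⟨e, he, hh⟩)
    · exact ⟨c, Finset.mem_insert_self c L, hh⟩
    · exact ⟨e, Finset.mem_insert_of_mem he, hh⟩

/-- Adding a comparator `c` to a layer is a no-op on `p` if `p c.1 ≤ p c.2`. -/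
lemma insert_noop {L : Layer n} {c : Comp n} (hL : NoOverlap L)
    (hi : ¬ usedIn L c.1) (hj : ¬ usedIn L c.2) (hcne : c.1 ≠ c.2)
    (p : Fin n → Bool) (hple : p c.1 = true → p c.2 = true) :
    applyLayer (insert c L) p = applyLayer L p := by
  have hIns : NoOverlap (insert c L) := noOverlap_insert hL hi hj
  funext k
  by_cases hk1 : k = c.1
  · subst hk1
    rw [eval_min hIns (Finset.mem_insert_self c L), eval_id hi]
    cases h1 : p c.1
    · simp
    · simp [hple h1]
  by_cases hk2 : k = c.2
  · subst hk2
    rw [eval_max hIns (Finset.mem_insert_self c L) hcne, eval_id hj]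
    cases h2 : p c.2
    · cases h1 : p c.1
      · simp
      · exact absurd (hple h1) (by simp [h2])
    · simp
  by_cases hu : usedIn L k
  · obtain ⟨e, he, hh⟩ := hu
    rcases hh with hh | hh
    · subst hh
      rw [eval_min hIns (Finset.mem_insert_of_mem he), eval_min hL he]
    · subst hh
      by_cases hene : e.1 = e.2
      · rw [← hene, eval_min hIns (Finset.mem_insert_of_mem he), eval_min hL he]
      · rw [eval_max hIns (Finset.mem_insert_of_mem he) hene,
          eval_max hL he hene]
  · have hu' : ¬ usedIn (insert c L) k := by
      rw [usedIn_insert]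
      rintro ((hh | hh) | hh)
      · exact hk1 hh.symm
      · exact hk2 hh.symm
      · exact hu hh
    rw [eval_id hu' , eval_id hu]

end Aux
section Aux2
variable {n : ℕ}

lemma permVec_apply (π : Equiv.Perm (Fin n)) (x : Fin n → Bool) (v : Fin n) :
    permVec π x v = x (π.symm v) := rfl

lemma permVec_injective (π : Equiv.Perm (Fin n)) :
    Function.Injective (permVec (n := n) π) := by
  intro x y hxy
  funext v
  have := congrFun hxy (π v)
  simpa [permVec] using this

/-- Number of coordinates with value `b`. -/
noncomputable def cnt (b : Bool) (z : Fin n → Bool) : ℕ :=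
  (Finset.univ.filter fun v => z v = b).card

lemma cnt_permVec (π : Equiv.Perm (Fin n)) (b : Bool) (z : Fin n → Bool) :
    cnt b (permVec π z) = cnt b z := by
  unfold cnt
  apply Finset.card_bij' (fun v _ => π.symm v) (fun v _ => π v)
  · intro a ha
    simp only [Finset.mem_filter, Finset.mem_univ, true_and] at ha ⊢
    exact ha
  · intro a ha
    simp only [Finset.mem_filter, Finset.mem_univ, true_and, permVec] at ha ⊢
    exact Finset.mem_filter.2 ⟨Finset.mem_univ _, by simpa [permVec] using ha⟩
  · intro a _; simp
  · intro a _; simp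

lemma applyLayer_empty (x : Fin n → Bool) : applyLayer (∅ : Layer n) x = x := by
  funext k
  exact eval_id (fun ⟨c, hc, _⟩ => absurd hc (Finset.notMem_empty c)) x

lemma applyLayer_insert {L : Layer n} {d : Comp n} (hL : NoOverlap (insert d L))
    (hdL : d ∉ L) (x : Fin n → Bool) :
    applyLayer (insert d L) x = applyLayer {d} (applyLayer L x) := by
  have hLsub : NoOverlap L := noOverlap_mono (Finset.subset_insert d L) hL
  have hsing : NoOverlap ({d} : Layer n) := by
    intro a ha b hb hne
    rw [Finset.mem_singleton] at ha hb
    exact absurd (ha.trans hb.symm) hne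
  have hd1 : ¬ usedIn L d.1 := by
    rintro ⟨e, he, hh⟩
    have hne : d ≠ e := fun heq => hdL (heq ▸ he)
    have := hL d (Finset.mem_insert_self d L) e (Finset.mem_insert_of_mem he) hne
    rcases hh with hh | hh
    · exact this.1 hh.symm
    · exact this.2.1 hh.symm
  have hd2 : ¬ usedIn L d.2 := by
    rintro ⟨e, he, hh⟩
    have hne : d ≠ e := fun heq => hdL (heq ▸ he)
    have := hL d (Finset.mem_insert_self d L) e (Finset.mem_insert_of_mem he) hne
    rcases hh with hh | hh
    · exact this.2.2.1 hh.symm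
    · exact this.2.2.2 hh.symm
  funext k
  by_cases hk1 : k = d.1
  · subst hk1
    rw [eval_min hL (Finset.mem_insert_self d L),
      eval_min hsing (Finset.mem_singleton_self d), eval_id hd1, eval_id hd2]
  by_cases hk2 : k = d.2
  · subst hk2
    have hne : d.1 ≠ d.2 := fun heq => hk1 heq.symm
    rw [eval_max hL (Finset.mem_insert_self d L) hne,
      eval_max hsing (Finset.mem_singleton_self d) hne, eval_id hd1, eval_id hd2]
  by_cases hu : usedIn L k
  · have hkd : ¬ usedIn ({d} : Layer n) k := by
      rintro ⟨e, he, hh⟩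
      rw [Finset.mem_singleton] at he
      subst he
      rcases hh with hh | hh
      · exact hk1 hh.symm
      · exact hk2 hh.symm
    rw [eval_id hkd]
    obtain ⟨e, he, hh⟩ := hu
    rcases hh with hh | hh
    · subst hh
      rw [eval_min hL (Finset.mem_insert_of_mem he), eval_min hLsub he]
    · subst hh
      by_cases hene : e.1 = e.2
      · rw [← hene, eval_min hL (Finset.mem_insert_of_mem he), eval_min hLsub he]
      · rw [eval_max hL (Finset.mem_insert_of_mem he) hene, eval_max hLsub he hene]
  · have hu1 : ¬ usedIn (insert d L) k := by
      rw [usedIn_insert]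
      rintro ((hh | hh) | hh)
      · exact hk1 hh.symm
      · exact hk2 hh.symm
      · exact hu hh
    have hkd : ¬ usedIn ({d} : Layer n) k := by
      rintro ⟨e, he, hh⟩
      rw [Finset.mem_singleton] at he
      subst he
      rcases hh with hh | hh
      · exact hk1 hh.symm
      · exact hk2 hh.symm
    rw [eval_id hu1, eval_id hkd, eval_id hu]

lemma cnt_single {d : Comp n} (hne : d.1 ≠ d.2) (b : Bool) (x : Fin n → Bool) :
    cnt b (applyLayer {d} x) = cnt b x := by
  have hsing : NoOverlap ({d} : Layer n) := by
    intro a ha b hb hne'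
    rw [Finset.mem_singleton] at ha hb
    exact absurd (ha.trans hb.symm) hne'
  have hmem : d ∈ ({d} : Layer n) := Finset.mem_singleton_self d
  have hval1 : applyLayer {d} x d.1 = (x d.1 && x d.2) := eval_min hsing hmem x
  have hval2 : applyLayer {d} x d.2 = (x d.1 || x d.2) := eval_max hsing hmem hne x
  have hvalo : ∀ k, k ≠ d.1 → k ≠ d.2 → applyLayer {d} x k = x k := by
    intro k hk1 hk2
    refine eval_id ?_ x
    rintro ⟨e, he, hh⟩
    rw [Finset.mem_singleton] at he
    subst he
    rcases hh with hh | hh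
    · exact hk1 hh.symm
    · exact hk2 hh.symm
  by_cases hsw : x d.1 = true ∧ x d.2 = false
  · -- swap case
    obtain ⟨hx1, hx2⟩ := hsw
    set y := applyLayer {d} x with hy
    have hy1 : y d.1 = false := by rw [hval1, hx1, hx2]; rfl
    have hy2 : y d.2 = true := by rw [hval2, hx1]; rfl
    cases b
    · -- b = false : filter y = insert d.1 (erase d.2 (filter x))
      unfold cnt
      have hsets : (Finset.univ.filter fun v => y v = false)
          = insert d.1 ((Finset.univ.filter fun v => x v = false).erase d.2) := by
        ext v
        simp only [Finset.mem_filter, Finset.mem_univ, true_and, Finset.mem_insert,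
          Finset.mem_erase]
        by_cases hv1 : v = d.1
        · subst hv1; simp [hy1]
        by_cases hv2 : v = d.2
        · subst hv2; simp [hy2, hne, hx2, Ne.symm hne]
        · simp [hvalo v hv1 hv2, hv1, hv2]
      rw [hsets, Finset.card_insert_of_notMem (by simp [hx1]),
        Finset.card_erase_of_mem (by simp [hx2])]
      have hpos : d.2 ∈ (Finset.univ.filter fun v => x v = false) := by simp [hx2]
      have := Finset.card_pos.2 ⟨d.2, hpos⟩
      omega
    · -- b = true : filter y = insert d.2 (erase d.1 (filter x))
      unfold cnt
      have hsets : (Finset.univ.filter fun v => y v = true)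
          = insert d.2 ((Finset.univ.filter fun v => x v = true).erase d.1) := by
        ext v
        simp only [Finset.mem_filter, Finset.mem_univ, true_and, Finset.mem_insert,
          Finset.mem_erase]
        by_cases hv2 : v = d.2
        · subst hv2; simp [hy2]
        by_cases hv1 : v = d.1
        · subst hv1; simp [hy1, hne, hx1]
        · simp [hvalo v hv1 hv2, hv1, hv2]
      rw [hsets, Finset.card_insert_of_notMem (by simp [hx2]),
        Finset.card_erase_of_mem (by simp [hx1])]
      have hpos : d.1 ∈ (Finset.univ.filter fun v => x v = true) := by simp [hx1]
      have := Finset.card_pos.2 ⟨d.1, hpos⟩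
      omega
  · -- no-op case
    have hid : applyLayer {d} x = x := by
      funext k
      by_cases hk1 : k = d.1
      · subst hk1
        rw [hval1]
        cases h1 : x d.1
        · rfl
        · cases h2 : x d.2
          · exact absurd ⟨h1, h2⟩ hsw
          · rfl
      by_cases hk2 : k = d.2
      · subst hk2
        rw [hval2]
        cases h2 : x d.2
        · cases h1 : x d.1
          · rfl
          · exact absurd ⟨h1, h2⟩ hsw
        · rw [Bool.or_true]
      · exact hvalo k hk1 hk2
    rw [hid]

lemma cnt_applyLayer {L : Layer n} (hL : NoOverlap L)
    (hne : ∀ c ∈ L, c.1 ≠ c.2) (b : Bool) (x : Fin n → Bool) :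
    cnt b (applyLayer L x) = cnt b x := by
  classical
  induction L using Finset.induction_on with
  | empty => rw [applyLayer_empty]
  | @insert d s hds ih =>
    rw [applyLayer_insert hL hds, cnt_single (hne d (Finset.mem_insert_self d s)) b,
      ih (noOverlap_mono (Finset.subset_insert d s) hL)
        (fun c hc => hne c (Finset.mem_insert_of_mem hc))]

lemma not_ssubset_permSet (X : Set (Fin n → Bool)) (π : Equiv.Perm (Fin n)) :
    ¬ X ⊂ permSet π X := by
  intro hss
  have hlt := Set.ncard_lt_ncard hss (Set.toFinite _)
  rw [permSet, Set.ncard_image_of_injective _ (permVec_injective π)] at hlt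
  exact lt_irrefl _ hlt

lemma applyLayer_of_mono {L : Layer n} (hL : NoOverlap L) {x : Fin n → Bool}
    (hm : ∀ e ∈ L, x e.1 = true → x e.2 = true) : applyLayer L x = x := by
  funext k
  by_cases hu : usedIn L k
  · obtain ⟨e, he, hh⟩ := hu
    rcases hh with hh | hh
    · subst hh
      rw [eval_min hL he]
      cases h1 : x e.1
      · rfl
      · rw [hm e he h1]; rfl
    · subst hh
      by_cases hene : e.1 = e.2
      · rw [← hene, eval_min hL he]
        cases h1 : x e.1
        · rfl
        · show x e.2 = true
          exact hene ▸ h1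
      · rw [eval_max hL he hene]
        cases h2 : x e.2
        · cases h1 : x e.1
          · rfl
          · rw [hm e he h1] at h2; exact absurd h2 (by simp)
        · rw [Bool.or_true]
  · exact eval_id hu x

end Aux2
section Aux3
variable {n : ℕ}

/-- Vector with value `b` exactly on `{s, t}`. -/
def chiv (b : Bool) (s t : Fin n) : Fin n → Bool :=
  fun v => if v = s ∨ v = t then b else !b

lemma chiv_left (b : Bool) (s t : Fin n) : chiv b s t s = b := by simp [chiv]

lemma chiv_right (b : Bool) (s t : Fin n) : chiv b s t t = b := by simp [chiv]

lemma chiv_other (b : Bool) {s t v : Fin n} (hs : v ≠ s) (ht : v ≠ t) :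
    chiv b s t v = !b := by simp [chiv, hs, ht]

lemma chiv_eq_iff (b : Bool) (s t v : Fin n) :
    chiv b s t v = b ↔ (v = s ∨ v = t) := by
  constructor
  · intro hv
    by_contra hc
    push_neg at hc
    rw [chiv_other b hc.1 hc.2] at hv
    cases b <;> simp_all
  · rintro (rfl | rfl) <;> simp [chiv]

lemma cnt_chiv (b : Bool) {s t : Fin n} (hst : s ≠ t) : cnt b (chiv b s t) = 2 := by
  unfold cnt
  have hsets : (Finset.univ.filter fun v => chiv b s t v = b) = {s, t} := by
    ext v
    simp only [Finset.mem_filter, Finset.mem_univ, true_and, Finset.mem_insert,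
      Finset.mem_singleton]
    exact chiv_eq_iff b s t v
  rw [hsets]
  exact Finset.card_pair hst

lemma eq_chiv_of {b : Bool} {x : Fin n → Bool} {s t : Fin n}
    (h2 : cnt b x = 2) (hs : x s = b) (ht : x t = b) (hst : s ≠ t) :
    x = chiv b s t := by
  have hsub : ({s, t} : Finset (Fin n)) ⊆ Finset.univ.filter fun v => x v = b := by
    intro v hv
    simp only [Finset.mem_insert, Finset.mem_singleton] at hv
    rcases hv with rfl | rfl <;> simp [hs, ht]
  have hcard : (Finset.univ.filter fun v => x v = b).card ≤ ({s, t} : Finset (Fin n)).card := by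
    rw [Finset.card_pair hst]
    exact le_of_eq h2
  have hsets := Finset.eq_of_subset_of_card_le hsub hcard
  funext v
  by_cases hv : v = s ∨ v = t
  · rw [(chiv_eq_iff b s t v).2 hv]
    rcases hv with rfl | rfl <;> assumption
  · push_neg at hv
    rw [chiv_other b hv.1 hv.2]
    have hvmem : v ∉ Finset.univ.filter fun v => x v = b := by
      rw [← hsets]
      simp only [Finset.mem_insert, Finset.mem_singleton]
      tauto
    simp only [Finset.mem_filter, Finset.mem_univ, true_and] at hvmem
    cases b <;> cases hxv : x v <;> simp_all

/-- Elements of `W` sharing a `b`-coordinate with `u`. -/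
def shSet (b : Bool) (W : Set (Fin n → Bool)) (u : Fin n → Bool) : Set (Fin n → Bool) :=
  {z | z ∈ W ∧ ∃ v, u v = b ∧ z v = b}

/-- Ordered pairs of distinct elements sharing a `b`-coordinate. -/
def Dset (b : Bool) (Z : Set (Fin n → Bool)) : Set ((Fin n → Bool) × (Fin n → Bool)) :=
  {p | p.1 ∈ Z ∧ p.2 ∈ Z ∧ p.1 ≠ p.2 ∧ ∃ v, p.1 v = b ∧ p.2 v = b}

lemma Dset_image (b : Bool) (π : Equiv.Perm (Fin n)) (Z : Set (Fin n → Bool)) :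
    Dset b (permVec π '' Z) =
      (fun p : (Fin n → Bool) × (Fin n → Bool) => (permVec π p.1, permVec π p.2)) '' Dset b Z := by
  ext p
  constructor
  · rintro ⟨⟨w1, hw1, he1⟩, ⟨w2, hw2, he2⟩, hne, v, hv1, hv2⟩
    refine ⟨(w1, w2), ⟨hw1, hw2, ?_, ⟨π.symm v, ?_, ?_⟩⟩, ?_⟩
    · show w1 ≠ w2
      intro hc
      exact hne (by rw [← he1, ← he2, hc])
    · show w1 (π.symm v) = b
      rw [show w1 (π.symm v) = permVec π w1 v from rfl, he1]; exact hv1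
    · show w2 (π.symm v) = b
      rw [show w2 (π.symm v) = permVec π w2 v from rfl, he2]; exact hv2
    · show (permVec π w1, permVec π w2) = p
      rw [he1, he2]
  · rintro ⟨⟨w1, w2⟩, ⟨hw1, hw2, hne, v, hv1, hv2⟩, rfl⟩
    refine ⟨⟨w1, hw1, rfl⟩, ⟨w2, hw2, rfl⟩, ?_, ⟨π v, ?_, ?_⟩⟩
    · show permVec π w1 ≠ permVec π w2
      intro hc
      exact hne (permVec_injective π hc)
    · show w1 (π.symm (π v)) = b
      rw [Equiv.symm_apply_apply]; exact hv1
    · show w2 (π.symm (π v)) = b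
      rw [Equiv.symm_apply_apply]; exact hv2

lemma Dset_insert (b : Bool) {Z : Set (Fin n → Bool)} {u : Fin n → Bool} (hu : u ∉ Z) :
    Dset b (insert u Z) =
      Dset b Z ∪ ((fun z => (u, z)) '' shSet b Z u) ∪ ((fun z => (z, u)) '' shSet b Z u) := by
  ext p
  constructor
  · rintro ⟨hp1, hp2, hne, v, hv1, hv2⟩
    rcases hp1 with rfl | hp1
    · rcases hp2 with hp2 | hp2
      · exact absurd hp2.symm hne
      · exact Or.inl (Or.inr ⟨p.2, ⟨hp2, v, hv1, hv2⟩, rfl⟩)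
    · rcases hp2 with hp2 | hp2
      · refine Or.inr ⟨p.1, ⟨hp1, v, ?_, hv1⟩, by rw [← hp2]⟩
        rw [hp2] at hv2; exact hv2
      · exact Or.inl (Or.inl ⟨hp1, hp2, hne, v, hv1, hv2⟩)
  · rintro ((⟨hp1, hp2, hne, hsh⟩ | ⟨z, ⟨hz, v, hv1, hv2⟩, rfl⟩) | ⟨z, ⟨hz, v, hv1, hv2⟩, rfl⟩)
    · exact ⟨Or.inr hp1, Or.inr hp2, hne, hsh⟩
    · exact ⟨Or.inl rfl, Or.inr hz, fun hc => hu ((show u = z from hc) ▸ hz),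
        v, hv1, hv2⟩
    · exact ⟨Or.inr hz, Or.inl rfl, fun hc => hu ((show z = u from hc).symm ▸ hz),
        v, hv2, hv1⟩

lemma ncard_Dset_insert (b : Bool) {Z : Set (Fin n → Bool)} {u : Fin n → Bool} (hu : u ∉ Z) :
    (Dset b (insert u Z)).ncard = (Dset b Z).ncard + 2 * (shSet b Z u).ncard := by
  rw [Dset_insert b hu]
  have hinj1 : Function.Injective (fun z : Fin n → Bool => (u, z)) := by
    intro a b hab; simpa using hab
  have hinj2 : Function.Injective (fun z : Fin n → Bool => (z, u)) := by
    intro a b hab; simpa using hab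
  have hd1 : Disjoint (Dset b Z) ((fun z => (u, z)) '' shSet b Z u) := by
    rw [Set.disjoint_left]
    rintro p ⟨hp1, _⟩ ⟨z, _, rfl⟩
    exact hu hp1
  have hd2 : Disjoint (Dset b Z ∪ (fun z => (u, z)) '' shSet b Z u)
      ((fun z => (z, u)) '' shSet b Z u) := by
    rw [Set.disjoint_left]
    rintro p hp ⟨z, hz, rfl⟩
    rcases hp with ⟨_, hp2, _⟩ | ⟨w, hw, heq⟩
    · exact hu hp2
    · have h1 : u = z := congrArg Prod.fst heq
      exact hu (h1.symm ▸ hz.1)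
  rw [Set.ncard_union_eq hd2 (Set.toFinite _) (Set.toFinite _),
    Set.ncard_union_eq hd1 (Set.toFinite _) (Set.toFinite _),
    Set.ncard_image_of_injective _ hinj1, Set.ncard_image_of_injective _ hinj2]
  ring

/-- The abstract counting core: a two-element exchange in the weight-2 slice
with strictly increased sharing count contradicts `Y ⊆ π(X)`. -/
lemma core_count {b : Bool} {π : Equiv.Perm (Fin n)} {X Y W : Set (Fin n → Bool)}
    {u0 u1 : Fin n → Bool}
    (hYX : Y ⊆ permSet π X)
    (hX2 : X ∩ {z | cnt b z = 2} = insert u0 W)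
    (hY2 : Y ∩ {z | cnt b z = 2} = insert u1 W)
    (hu0 : u0 ∉ W) (hu1 : u1 ∉ W)
    (hS : (shSet b W u0).ncard < (shSet b W u1).ncard) : False := by
  have hsub : insert u1 W ⊆ permVec π '' (insert u0 W) := by
    rw [← hY2, ← hX2]
    rintro z ⟨hzY, hz2⟩
    obtain ⟨w, hwX, hwz⟩ := hYX hzY
    refine ⟨w, ⟨hwX, ?_⟩, hwz⟩
    show cnt b w = 2
    rw [← cnt_permVec π b w, hwz]
    exact hz2
  have hcard0 : (insert u0 W).ncard = W.ncard + 1 :=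
    Set.ncard_insert_of_notMem hu0 (Set.toFinite _)
  have hcard1 : (insert u1 W).ncard = W.ncard + 1 :=
    Set.ncard_insert_of_notMem hu1 (Set.toFinite _)
  have hEq : insert u1 W = permVec π '' (insert u0 W) := by
    refine Set.eq_of_subset_of_ncard_le hsub ?_ (Set.toFinite _)
    rw [Set.ncard_image_of_injective _ (permVec_injective π), hcard0, hcard1]
  have hD : (Dset b (insert u1 W)).ncard = (Dset b (insert u0 W)).ncard := by
    rw [hEq, Dset_image]
    apply Set.ncard_image_of_injective
    intro p q hpq
    simp only [Prod.mk.injEq] at hpq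
    exact Prod.ext_iff.2 ⟨permVec_injective π hpq.1, permVec_injective π hpq.2⟩
  rw [ncard_Dset_insert b hu0, ncard_Dset_insert b hu1] at hD
  omega

end Aux3
section Aux4
variable {n : ℕ}

lemma step_min_unused {L : Layer n} {a a' : Fin n} {d : Comp n}
    (hL : NoOverlap L) (ha : ¬ usedIn L a) (hd : d ∈ L) (hdne : d.1 ≠ d.2)
    (ha' : a' = d.1 ∨ a' = d.2) :
    applyLayer L (chiv true a a') = chiv true a d.2 := by
  have had1 : a ≠ d.1 := fun h => ha ⟨d, hd, Or.inl h.symm⟩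
  have had2 : a ≠ d.2 := fun h => ha ⟨d, hd, Or.inr h.symm⟩
  set x := chiv true a a' with hxdef
  have hmin : (x d.1 && x d.2) = false := by
    rcases ha' with rfl | rfl
    · rw [hxdef, chiv_other true (Ne.symm had2) (fun h => hdne h.symm)]
      simp
    · rw [hxdef, chiv_other true (Ne.symm had1) hdne]
      rfl
  have hmax : (x d.1 || x d.2) = true := by
    rcases ha' with rfl | rfl
    · rw [hxdef, chiv_right]; rfl
    · rw [hxdef, chiv_right]; simp
  funext k
  by_cases hu : usedIn L k
  · obtain ⟨e, he, hh⟩ := hu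
    by_cases hed : e = d
    · subst hed
      rcases hh with hh | hh
      · subst hh
        rw [eval_min hL he, hmin, chiv_other true (Ne.symm had1) hdne]
        rfl
      · subst hh
        rw [eval_max hL he hdne, hmax, chiv_right]
    · have hdisj := hL e he d hd hed
      have hxe1 : x e.1 = false := by
        rw [hxdef]
        refine chiv_other true (fun h => ha ⟨e, he, Or.inl h⟩) ?_
        rcases ha' with rfl | rfl
        · exact hdisj.1
        · exact hdisj.2.1
      have hxe2 : x e.2 = false := by
        rw [hxdef]
        refine chiv_other true (fun h => ha ⟨e, he, Or.inr h⟩) ?_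
        rcases ha' with rfl | rfl
        · exact hdisj.2.2.1
        · exact hdisj.2.2.2
      rcases hh with hh | hh
      · subst hh
        rw [eval_min hL he, hxe1,
          chiv_other true (fun h => ha ⟨e, he, Or.inl h⟩) (fun h => hdisj.2.1 h)]
        rfl
      · by_cases hene : e.1 = e.2
        · subst hh
          rw [← hene, eval_min hL he, hxe1,
            chiv_other true (fun h => ha ⟨e, he, Or.inl h⟩) (fun h => hdisj.2.1 h)]
          rfl
        · subst hh
          rw [eval_max hL he hene, hxe1, hxe2,
            chiv_other true (fun h => ha ⟨e, he, Or.inr h⟩) (fun h => hdisj.2.2.2 h)]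
          rfl
  · rw [eval_id hu]
    by_cases hka : k = a
    · subst hka
      rw [hxdef, chiv_left, chiv_left]
    · have hka' : k ≠ a' := by
        rintro rfl
        rcases ha' with rfl | rfl
        · exact hu ⟨d, hd, Or.inl rfl⟩
        · exact hu ⟨d, hd, Or.inr rfl⟩
      have hkd2 : k ≠ d.2 := fun h => hu ⟨d, hd, Or.inr h.symm⟩
      rw [hxdef, chiv_other true hka hka', chiv_other true hka hkd2]

end Aux4
section Aux5
variable {n : ℕ}

lemma step_min_comp {L : Layer n} {a' : Fin n} {c0 d : Comp n}
    (hL : NoOverlap L) (hc0 : c0 ∈ L) (hd : d ∈ L) (hcd : c0 ≠ d)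
    (hc0ne : c0.1 ≠ c0.2) (hdne : d.1 ≠ d.2)
    (ha' : a' = d.1 ∨ a' = d.2) :
    applyLayer L (chiv true c0.1 a') = chiv true c0.2 d.2 := by
  have hdisj0 := hL c0 hc0 d hd hcd
  set x := chiv true c0.1 a' with hxdef
  have hxc01 : x c0.1 = true := chiv_left true c0.1 a'
  have hxc02 : x c0.2 = false := by
    refine chiv_other true (Ne.symm hc0ne) ?_
    rcases ha' with rfl | rfl
    · exact hdisj0.2.2.1
    · exact hdisj0.2.2.2
  have hmin : (x d.1 && x d.2) = false := by
    rcases ha' with rfl | rfl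
    · rw [hxdef, chiv_other true (Ne.symm hdisj0.2.1) (fun h => hdne h.symm)]
      simp
    · rw [hxdef, chiv_other true (Ne.symm hdisj0.1) hdne]
      rfl
  have hmax : (x d.1 || x d.2) = true := by
    rcases ha' with rfl | rfl
    · rw [hxdef, chiv_right]; rfl
    · rw [hxdef, chiv_right]; simp
  funext k
  by_cases hu : usedIn L k
  · obtain ⟨e, he, hh⟩ := hu
    by_cases hec : e = c0
    · subst hec
      rcases hh with hh | hh
      · subst hh
        rw [eval_min hL he, hxc01, hxc02,
          chiv_other true hc0ne hdisj0.2.1]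
        rfl
      · subst hh
        rw [eval_max hL he hc0ne, hxc01, chiv_left]
        rfl
    by_cases hed : e = d
    · subst hed
      rcases hh with hh | hh
      · subst hh
        rw [eval_min hL he, hmin,
          chiv_other true (Ne.symm hdisj0.2.2.1) hdne]
        rfl
      · subst hh
        rw [eval_max hL he hdne, hmax, chiv_right]
    · have hdisjc := hL e he c0 hc0 hec
      have hdisjd := hL e he d hd hed
      have hxe1 : x e.1 = false := by
        refine chiv_other true hdisjc.1 ?_
        rcases ha' with rfl | rfl
        · exact hdisjd.1
        · exact hdisjd.2.1
      have hxe2 : x e.2 = false := by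
        refine chiv_other true hdisjc.2.2.1 ?_
        rcases ha' with rfl | rfl
        · exact hdisjd.2.2.1
        · exact hdisjd.2.2.2
      rcases hh with hh | hh
      · subst hh
        rw [eval_min hL he, hxe1, chiv_other true hdisjc.2.1 hdisjd.2.1]
        rfl
      · by_cases hene : e.1 = e.2
        · subst hh
          rw [← hene, eval_min hL he, hxe1,
            chiv_other true hdisjc.2.1 hdisjd.2.1]
          rfl
        · subst hh
          rw [eval_max hL he hene, hxe1, hxe2,
            chiv_other true hdisjc.2.2.2 hdisjd.2.2.2]
          rfl
  · rw [eval_id hu]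
    have hk1 : k ≠ c0.1 := fun h => hu ⟨c0, hc0, Or.inl h.symm⟩
    have hk2 : k ≠ c0.2 := fun h => hu ⟨c0, hc0, Or.inr h.symm⟩
    have hkd2 : k ≠ d.2 := fun h => hu ⟨d, hd, Or.inr h.symm⟩
    have hka' : k ≠ a' := by
      rintro rfl
      rcases ha' with rfl | rfl
      · exact hu ⟨d, hd, Or.inl rfl⟩
      · exact hu ⟨d, hd, Or.inr rfl⟩
    rw [hxdef, chiv_other true hk1 hka', chiv_other true hk2 hkd2]

lemma step_max_unused {L : Layer n} {a a' : Fin n} {d : Comp n}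
    (hL : NoOverlap L) (ha : ¬ usedIn L a) (hd : d ∈ L) (hdne : d.1 ≠ d.2)
    (ha' : a' = d.1 ∨ a' = d.2) :
    applyLayer L (chiv false a a') = chiv false a d.1 := by
  have had1 : a ≠ d.1 := fun h => ha ⟨d, hd, Or.inl h.symm⟩
  have had2 : a ≠ d.2 := fun h => ha ⟨d, hd, Or.inr h.symm⟩
  set x := chiv false a a' with hxdef
  have hmin : (x d.1 && x d.2) = false := by
    rcases ha' with rfl | rfl
    · rw [hxdef, chiv_right]; rfl
    · rw [hxdef, chiv_right]; simp
  have hmax : (x d.1 || x d.2) = true := by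
    rcases ha' with rfl | rfl
    · rw [hxdef, chiv_other false (Ne.symm had2) (fun h => hdne h.symm)]
      simp
    · rw [hxdef, chiv_other false (Ne.symm had1) hdne]
      rfl
  funext k
  by_cases hu : usedIn L k
  · obtain ⟨e, he, hh⟩ := hu
    by_cases hed : e = d
    · subst hed
      rcases hh with hh | hh
      · subst hh
        rw [eval_min hL he, hmin, chiv_right]
      · subst hh
        rw [eval_max hL he hdne, hmax,
          chiv_other false (Ne.symm had2) (fun h => hdne h.symm)]
        rfl
    · have hdisj := hL e he d hd hed
      have hxe1 : x e.1 = true := by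
        rw [hxdef]
        refine chiv_other false (fun h => ha ⟨e, he, Or.inl h⟩) ?_
        rcases ha' with rfl | rfl
        · exact hdisj.1
        · exact hdisj.2.1
      have hxe2 : x e.2 = true := by
        rw [hxdef]
        refine chiv_other false (fun h => ha ⟨e, he, Or.inr h⟩) ?_
        rcases ha' with rfl | rfl
        · exact hdisj.2.2.1
        · exact hdisj.2.2.2
      rcases hh with hh | hh
      · subst hh
        rw [eval_min hL he, hxe1, hxe2,
          chiv_other false (fun h => ha ⟨e, he, Or.inl h⟩) (fun h => hdisj.1 h)]
        rfl
      · by_cases hene : e.1 = e.2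
        · subst hh
          rw [← hene, eval_min hL he, hxe1, ← hene, hxe1,
            chiv_other false (fun h => ha ⟨e, he, Or.inl h⟩) (fun h => hdisj.1 h)]
          rfl
        · subst hh
          rw [eval_max hL he hene, hxe1,
            chiv_other false (fun h => ha ⟨e, he, Or.inr h⟩) (fun h => hdisj.2.2.1 h)]
          rfl
  · rw [eval_id hu]
    by_cases hka : k = a
    · subst hka
      rw [hxdef, chiv_left, chiv_left]
    · have hka' : k ≠ a' := by
        rintro rfl
        rcases ha' with rfl | rfl
        · exact hu ⟨d, hd, Or.inl rfl⟩
        · exact hu ⟨d, hd, Or.inr rfl⟩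
      have hkd1 : k ≠ d.1 := fun h => hu ⟨d, hd, Or.inl h.symm⟩
      rw [hxdef, chiv_other false hka hka', chiv_other false hka hkd1]

lemma step_max_comp {L : Layer n} {a' : Fin n} {c0 d : Comp n}
    (hL : NoOverlap L) (hc0 : c0 ∈ L) (hd : d ∈ L) (hcd : c0 ≠ d)
    (hc0ne : c0.1 ≠ c0.2) (hdne : d.1 ≠ d.2)
    (ha' : a' = d.1 ∨ a' = d.2) :
    applyLayer L (chiv false c0.2 a') = chiv false c0.1 d.1 := by
  have hdisj0 := hL c0 hc0 d hd hcd
  set x := chiv false c0.2 a' with hxdef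
  have hxc01 : x c0.1 = true := by
    refine chiv_other false hc0ne ?_
    rcases ha' with rfl | rfl
    · exact hdisj0.1
    · exact hdisj0.2.1
  have hxc02 : x c0.2 = false := chiv_left false c0.2 a'
  have hmin : (x d.1 && x d.2) = false := by
    rcases ha' with rfl | rfl
    · rw [hxdef, chiv_right]; rfl
    · rw [hxdef, chiv_right]; simp
  have hmax : (x d.1 || x d.2) = true := by
    rcases ha' with rfl | rfl
    · rw [hxdef, chiv_other false (Ne.symm hdisj0.2.2.2) (fun h => hdne h.symm)]
      simp
    · rw [hxdef, chiv_other false (Ne.symm hdisj0.2.2.1) hdne]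
      rfl
  funext k
  by_cases hu : usedIn L k
  · obtain ⟨e, he, hh⟩ := hu
    by_cases hec : e = c0
    · subst hec
      rcases hh with hh | hh
      · subst hh
        rw [eval_min hL he, hxc01, hxc02, chiv_left]
        rfl
      · subst hh
        rw [eval_max hL he hc0ne, hxc02,
          chiv_other false (Ne.symm hc0ne) hdisj0.2.2.1]
        simp [hxc01]
    by_cases hed : e = d
    · subst hed
      rcases hh with hh | hh
      · subst hh
        rw [eval_min hL he, hmin, chiv_right]
      · subst hh
        rw [eval_max hL he hdne, hmax,
          chiv_other false (Ne.symm hdisj0.2.1) (fun h => hdne h.symm)]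
        rfl
    · have hdisjc := hL e he c0 hc0 hec
      have hdisjd := hL e he d hd hed
      have hxe1 : x e.1 = true := by
        refine chiv_other false hdisjc.2.1 ?_
        rcases ha' with rfl | rfl
        · exact hdisjd.1
        · exact hdisjd.2.1
      have hxe2 : x e.2 = true := by
        refine chiv_other false hdisjc.2.2.2 ?_
        rcases ha' with rfl | rfl
        · exact hdisjd.2.2.1
        · exact hdisjd.2.2.2
      rcases hh with hh | hh
      · subst hh
        rw [eval_min hL he, hxe1, hxe2,
          chiv_other false hdisjc.1 hdisjd.1]
        rfl
      · by_cases hene : e.1 = e.2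
        · subst hh
          rw [← hene, eval_min hL he, hxe1, ← hene, hxe1,
            chiv_other false hdisjc.1 hdisjd.1]
          rfl
        · subst hh
          rw [eval_max hL he hene, hxe1,
            chiv_other false hdisjc.2.2.1 hdisjd.2.2.1]
          rfl
  · rw [eval_id hu]
    have hk1 : k ≠ c0.1 := fun h => hu ⟨c0, hc0, Or.inl h.symm⟩
    have hk2 : k ≠ c0.2 := fun h => hu ⟨c0, hc0, Or.inr h.symm⟩
    have hkd1 : k ≠ d.1 := fun h => hu ⟨d, hd, Or.inl h.symm⟩
    have hka' : k ≠ a' := by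
      rintro rfl
      rcases ha' with rfl | rfl
      · exact hu ⟨d, hd, Or.inl rfl⟩
      · exact hu ⟨d, hd, Or.inr rfl⟩
    rw [hxdef, chiv_other false hk2 hka', chiv_other false hk1 hkd1]

end Aux5
section Aux6
variable {n : ℕ}

lemma uniq_fst {L : Layer n} (hO : NoOverlap L) {d e : Comp n} (hd : d ∈ L)
    (he : e ∈ L) (h : e.1 = d.1) : e = d := by
  by_contra hne
  exact (hO e he d hd hne).1 h

lemma uniq_snd {L : Layer n} (hO : NoOverlap L) {d e : Comp n} (hd : d ∈ L)
    (he : e ∈ L) (h : e.2 = d.2) : e = d := by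
  by_contra hne
  exact (hO e he d hd hne).2.2.2 h

lemma mixed_fst {L : Layer n} (hO : NoOverlap L) {d e : Comp n} (hd : d ∈ L)
    (he : e ∈ L) (hdne : d.1 ≠ d.2) (h : e.1 = d.2) : False := by
  by_cases hed : e = d
  · exact hdne (hed ▸ h)
  · exact (hO e he d hd hed).2.1 h

lemma mixed_snd {L : Layer n} (hO : NoOverlap L) {d e : Comp n} (hd : d ∈ L)
    (he : e ∈ L) (hdne : d.1 ≠ d.2) (h : e.2 = d.1) : False := by
  by_cases hed : e = d
  · exact hdne (hed ▸ h).symm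
  · exact (hO e he d hd hed).2.2.1 h

/-- Main abstract endgame: exchange of one weight-2 output with strictly more
sharing contradicts inclusion into a permuted output set. -/
lemma endgame (b : Bool) (π : Equiv.Perm (Fin n))
    (F G : (Fin n → Bool) → (Fin n → Bool)) (x0 u0 u1 u0' : Fin n → Bool)
    (hcntF : ∀ x, cnt b (F x) = cnt b x)
    (hcntG : ∀ x, cnt b (G x) = cnt b x)
    (hcnt0 : cnt b x0 = 2)
    (hFG : ∀ x, cnt b x = 2 → x ≠ x0 → G x = F x)
    (hF0 : F x0 = u0) (hG0 : G x0 = u1)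
    (hYX : Set.range G ⊆ permSet π (Set.range F))
    (hu0W : ∀ x, cnt b x = 2 → x ≠ x0 → F x ≠ u0)
    (hu1W : ∀ x, cnt b x = 2 → x ≠ x0 → F x ≠ u1)
    (hshsub : ∀ x, cnt b x = 2 → x ≠ x0 →
      (∃ v, u0 v = b ∧ F x v = b) → (∃ v, u1 v = b ∧ F x v = b))
    (hwit : ∃ x, cnt b x = 2 ∧ x ≠ x0 ∧ F x = u0')
    (hu0'1 : ∃ v, u1 v = b ∧ u0' v = b)
    (hu0'0 : ¬ ∃ v, u0 v = b ∧ u0' v = b) : False := by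
  set W : Set (Fin n → Bool) := F '' {x | cnt b x = 2 ∧ x ≠ x0} with hW
  have hX2 : Set.range F ∩ {z | cnt b z = 2} = insert u0 W := by
    ext z
    constructor
    · rintro ⟨⟨x, rfl⟩, hz2⟩
      by_cases hx0 : x = x0
      · subst hx0
        exact Or.inl hF0
      · exact Or.inr ⟨x, ⟨by rw [← hcntF x]; exact hz2, hx0⟩, rfl⟩
    · rintro (hz | ⟨x, ⟨hx2, hxx0⟩, rfl⟩)
      · refine ⟨⟨x0, hF0.trans hz.symm⟩, ?_⟩
        show cnt b z = 2
        rw [hz, ← hF0, hcntF]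
        exact hcnt0
      · exact ⟨⟨x, rfl⟩, by rw [Set.mem_setOf_eq, hcntF]; exact hx2⟩
  have hY2 : Set.range G ∩ {z | cnt b z = 2} = insert u1 W := by
    ext z
    constructor
    · rintro ⟨⟨x, rfl⟩, hz2⟩
      by_cases hx0 : x = x0
      · subst hx0
        exact Or.inl hG0
      · refine Or.inr ⟨x, ⟨by rw [← hcntG x]; exact hz2, hx0⟩, ?_⟩
        rw [← hFG x (by rw [← hcntG x]; exact hz2) hx0]
    · rintro (hz | ⟨x, ⟨hx2, hxx0⟩, rfl⟩)
      · refine ⟨⟨x0, hG0.trans hz.symm⟩, ?_⟩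
        show cnt b z = 2
        rw [hz, ← hG0, hcntG]
        exact hcnt0
      · refine ⟨⟨x, hFG x hx2 hxx0⟩, ?_⟩
        rw [Set.mem_setOf_eq, hcntF]
        exact hx2
  have hu0 : u0 ∉ W := by
    rintro ⟨x, ⟨hx2, hxx0⟩, hFx⟩
    exact hu0W x hx2 hxx0 hFx
  have hu1 : u1 ∉ W := by
    rintro ⟨x, ⟨hx2, hxx0⟩, hFx⟩
    exact hu1W x hx2 hxx0 hFx
  have hS : (shSet b W u0).ncard < (shSet b W u1).ncard := by
    have hsub : shSet b W u0 ⊆ shSet b W u1 := by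
      rintro z ⟨hzW, hsh⟩
      refine ⟨hzW, ?_⟩
      obtain ⟨x, hx, rfl⟩ := hzW
      exact hshsub x hx.1 hx.2 hsh
    obtain ⟨xw, hxw2, hxwne, hxwF⟩ := hwit
    have hmem1 : u0' ∈ shSet b W u1 := ⟨⟨xw, ⟨hxw2, hxwne⟩, hxwF⟩, hu0'1⟩
    have hmem0 : u0' ∉ shSet b W u0 := fun hc => hu0'0 hc.2
    exact Set.ncard_lt_ncard ((Set.ssubset_iff_of_subset hsub).2 ⟨u0', hmem1, hmem0⟩)
      (Set.toFinite _)
  exact core_count hYX hX2 hY2 hu0 hu1 hS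

end Aux6
section Aux7
variable {n : ℕ}

lemma min_case_false {L1 L2 : Layer n}
    (hO1 : NoOverlap L1) (hlt1 : ∀ e ∈ L1, e.1 < e.2)
    (hO2 : NoOverlap L2) (hlt2 : ∀ e ∈ L2, e.1 < e.2)
    {c : Comp n} (hclt : c.1 < c.2) (hc1u : ¬ usedIn L2 c.1) (hc2u : ¬ usedIn L2 c.2)
    {ci cj : Comp n} (hci : ci ∈ L1) (hcj : cj ∈ L1)
    (hci1 : ci.1 = c.1) (hcj1 : cj.1 = c.2)
    (husedi : usedIn L2 ci.2) (husedj : usedIn L2 cj.2)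
    (hpart : ∀ i' j' : Fin n, Joined L1 c.1 i' → Joined L1 c.2 j' → ¬ Joined L2 i' j')
    (π : Equiv.Perm (Fin n))
    (hsub : Set.range (run [L1, insert c L2]) ⊆ permSet π (Set.range (run [L1, L2]))) :
    False := by
  have hcne : c.1 ≠ c.2 := ne_of_lt hclt
  have hcine : ci.1 ≠ ci.2 := ne_of_lt (hlt1 ci hci)
  have hcjne : cj.1 ≠ cj.2 := ne_of_lt (hlt1 cj hcj)
  have hcicj : ci ≠ cj := fun heq => hcne (by rw [← hci1, ← hcj1, heq])
  have hdisjij := hO1 ci hci cj hcj hcicj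
  obtain ⟨di, hdi, hdi'⟩ := husedi
  obtain ⟨dj, hdj, hdj'⟩ := husedj
  have hdine : di.1 ≠ di.2 := ne_of_lt (hlt2 di hdi)
  have hdjne : dj.1 ≠ dj.2 := ne_of_lt (hlt2 dj hdj)
  have hJii' : Joined L1 c.1 ci.2 :=
    Or.inl (by rw [show (c.1, ci.2) = ci from Prod.ext_iff.2 ⟨hci1.symm, rfl⟩]; exact hci)
  have hJjj' : Joined L1 c.2 cj.2 :=
    Or.inl (by rw [show (c.2, cj.2) = cj from Prod.ext_iff.2 ⟨hcj1.symm, rfl⟩]; exact hcj)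
  have hi'j' : ci.2 ≠ cj.2 := hdisjij.2.2.2
  have hdidj : di ≠ dj := by
    intro heq
    subst heq
    refine hpart ci.2 cj.2 hJii' hJjj' ?_
    rcases hdi' with h1 | h1 <;> rcases hdj' with h2 | h2
    · exact absurd (h1.symm.trans h2) hi'j'
    · refine Or.inl ?_
      rw [show (ci.2, cj.2) = di from Prod.ext_iff.2 ⟨h1.symm, h2.symm⟩]
      exact hdi
    · refine Or.inr ?_
      rw [show (cj.2, ci.2) = di from Prod.ext_iff.2 ⟨h2.symm, h1.symm⟩]
      exact hdi
    · exact absurd (h1.symm.trans h2) hi'j'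
  have hdisjD := hO2 di hdi dj hdj hdidj
  have hMiMj : di.2 ≠ dj.2 := hdisjD.2.2.2
  have hic : c.1 ≠ ci.2 := by rw [← hci1]; exact hcine
  have hjc : c.2 ≠ cj.2 := by rw [← hcj1]; exact hcjne
  have hcdi : c ≠ di := fun heq => hc1u ⟨di, hdi, Or.inl (congrArg Prod.fst heq).symm⟩
  have hMi_ne_c2 : di.2 ≠ c.2 := fun hh => hc2u ⟨di, hdi, Or.inr hh⟩
  have hMj_ne_c2 : dj.2 ≠ c.2 := fun hh => hc2u ⟨dj, hdj, Or.inr hh⟩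
  have hMj_ne_c1 : dj.2 ≠ c.1 := fun hh => hc1u ⟨dj, hdj, Or.inr hh⟩
  have hcj2c1 : cj.2 ≠ c.1 := by rw [← hci1]; exact Ne.symm hdisjij.2.1
  have hne1 : ∀ e ∈ L1, e.1 ≠ e.2 := fun e he => ne_of_lt (hlt1 e he)
  have hne2 : ∀ e ∈ L2, e.1 ≠ e.2 := fun e he => ne_of_lt (hlt2 e he)
  have hO2' : NoOverlap (insert c L2) := noOverlap_insert hO2 hc1u hc2u
  have hne2' : ∀ e ∈ insert c L2, e.1 ≠ e.2 := by
    intro e he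
    rcases Finset.mem_insert.1 he with rfl | he'
    · exact hcne
    · exact hne2 e he'
  have hdiOr : ci.2 = di.1 ∨ ci.2 = di.2 := by
    rcases hdi' with h | h
    · exact Or.inl h.symm
    · exact Or.inr h.symm
  have hdjOr : cj.2 = dj.1 ∨ cj.2 = dj.2 := by
    rcases hdj' with h | h
    · exact Or.inl h.symm
    · exact Or.inr h.symm
  have hmono_i : applyLayer L1 (chiv true c.1 ci.2) = chiv true c.1 ci.2 := by
    rw [← hci1]
    apply applyLayer_of_mono hO1
    intro e he h1
    rw [chiv_eq_iff] at h1
    rcases h1 with h1 | h1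
    · rw [uniq_fst hO1 hci he h1]
      exact chiv_right true ci.1 ci.2
    · exact absurd h1 fun h1 => mixed_fst hO1 hci he hcine h1
  have hmono_j : applyLayer L1 (chiv true c.2 cj.2) = chiv true c.2 cj.2 := by
    rw [← hcj1]
    apply applyLayer_of_mono hO1
    intro e he h1
    rw [chiv_eq_iff] at h1
    rcases h1 with h1 | h1
    · rw [uniq_fst hO1 hcj he h1]
      exact chiv_right true cj.1 cj.2
    · exact absurd h1 fun h1 => mixed_fst hO1 hcj he hcjne h1
  have hF0 : run [L1, L2] (chiv true c.1 ci.2) = chiv true c.1 di.2 := by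
    rw [run_two, hmono_i]
    exact step_min_unused hO2 hc1u hdi hdine hdiOr
  have hG0 : run [L1, insert c L2] (chiv true c.1 ci.2) = chiv true c.2 di.2 := by
    rw [run_two, hmono_i]
    exact step_min_comp hO2' (Finset.mem_insert_self c L2)
      (Finset.mem_insert_of_mem hdi) hcdi hcne hdine hdiOr
  have hFwit : run [L1, L2] (chiv true c.2 cj.2) = chiv true c.2 dj.2 := by
    rw [run_two, hmono_j]
    exact step_min_unused hO2 hc2u hdj hdjne hdjOr
  have hval1 : ∀ x : Fin n → Bool, run [L1, L2] x c.1 = (x c.1 && x ci.2) := by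
    intro x
    rw [run_two, eval_id hc1u, ← hci1]
    exact eval_min hO1 hci x
  have hval2 : ∀ x : Fin n → Bool, run [L1, L2] x c.2 = (x c.2 && x cj.2) := by
    intro x
    rw [run_two, eval_id hc2u, ← hcj1]
    exact eval_min hO1 hcj x
  have hforce_i : ∀ x : Fin n → Bool, cnt true x = 2 → (x c.1 && x ci.2) = true →
      x = chiv true c.1 ci.2 := by
    intro x hx2 hb
    rw [Bool.and_eq_true] at hb
    exact eq_chiv_of hx2 hb.1 hb.2 hic
  have hforce_j : ∀ x : Fin n → Bool, cnt true x = 2 → (x c.2 && x cj.2) = true →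
      x = chiv true c.2 cj.2 := by
    intro x hx2 hb
    rw [Bool.and_eq_true] at hb
    exact eq_chiv_of hx2 hb.1 hb.2 hjc
  refine endgame true π (run [L1, L2]) (run [L1, insert c L2])
    (chiv true c.1 ci.2) (chiv true c.1 di.2) (chiv true c.2 di.2) (chiv true c.2 dj.2)
    ?_ ?_ ?_ ?_ hF0 hG0 hsub ?_ ?_ ?_ ?_ ?_ ?_
  · intro x
    rw [run_two, cnt_applyLayer hO2 hne2, cnt_applyLayer hO1 hne1]
  · intro x
    rw [run_two, cnt_applyLayer hO2' hne2', cnt_applyLayer hO1 hne1]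
  · exact cnt_chiv true hic
  · -- hFG
    intro x hx2 hxx0
    rw [run_two, run_two]
    refine insert_noop hO2 hc1u hc2u hcne _ ?_
    intro hp
    rw [← hci1, eval_min hO1 hci, hci1] at hp
    exact absurd (hforce_i x hx2 hp) hxx0
  · -- hu0W
    intro x hx2 hxx0 hFx
    apply hxx0
    apply hforce_i x hx2
    rw [← hval1 x, hFx]
    exact chiv_left true c.1 di.2
  · -- hu1W
    intro x hx2 hxx0 hFx
    have hc2v : (x c.2 && x cj.2) = true := by
      rw [← hval2 x, hFx]
      exact chiv_left true c.2 di.2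
    rw [hforce_j x hx2 hc2v, hFwit] at hFx
    have hcf := congrFun hFx dj.2
    rw [chiv_right true c.2 dj.2, chiv_other true hMj_ne_c2 (Ne.symm hMiMj)] at hcf
    exact absurd hcf (by simp)
  · -- hshsub
    rintro x hx2 hxx0 ⟨v, hv0, hvz⟩
    rw [chiv_eq_iff] at hv0
    rcases hv0 with rfl | rfl
    · exfalso
      apply hxx0
      apply hforce_i x hx2
      rw [← hval1 x]
      exact hvz
    · exact ⟨di.2, chiv_right true c.2 di.2, hvz⟩
  · -- hwit
    refine ⟨chiv true c.2 cj.2, cnt_chiv true hjc, ?_, hFwit⟩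
    intro heq
    have hcf := congrFun heq c.1
    rw [chiv_other true hcne (Ne.symm hcj2c1), chiv_left true c.1 ci.2] at hcf
    exact absurd hcf (by simp)
  · -- hu0'1
    exact ⟨c.2, chiv_left true c.2 di.2, chiv_left true c.2 dj.2⟩
  · -- hu0'0
    rintro ⟨v, hv0, hv0'⟩
    rw [chiv_eq_iff] at hv0
    rcases hv0 with rfl | rfl
    · rw [chiv_other true hcne (Ne.symm hMj_ne_c1)] at hv0'
      exact absurd hv0' (by simp)
    · rw [chiv_other true hMi_ne_c2 hMiMj] at hv0'
      exact absurd hv0' (by simp)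

end Aux7
section Aux8
variable {n : ℕ}

lemma max_case_false {L1 L2 : Layer n}
    (hO1 : NoOverlap L1) (hlt1 : ∀ e ∈ L1, e.1 < e.2)
    (hO2 : NoOverlap L2) (hlt2 : ∀ e ∈ L2, e.1 < e.2)
    {c : Comp n} (hclt : c.1 < c.2) (hc1u : ¬ usedIn L2 c.1) (hc2u : ¬ usedIn L2 c.2)
    {ci cj : Comp n} (hci : ci ∈ L1) (hcj : cj ∈ L1)
    (hci2 : ci.2 = c.1) (hcj2 : cj.2 = c.2)
    (husedi : usedIn L2 ci.1) (husedj : usedIn L2 cj.1)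
    (hpart : ∀ i' j' : Fin n, Joined L1 c.1 i' → Joined L1 c.2 j' → ¬ Joined L2 i' j')
    (π : Equiv.Perm (Fin n))
    (hsub : Set.range (run [L1, insert c L2]) ⊆ permSet π (Set.range (run [L1, L2]))) :
    False := by
  have hcne : c.1 ≠ c.2 := ne_of_lt hclt
  have hcine : ci.1 ≠ ci.2 := ne_of_lt (hlt1 ci hci)
  have hcjne : cj.1 ≠ cj.2 := ne_of_lt (hlt1 cj hcj)
  have hcicj : ci ≠ cj := fun heq => hcne (by rw [← hci2, ← hcj2, heq])
  have hdisjij := hO1 ci hci cj hcj hcicj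
  obtain ⟨di, hdi, hdi'⟩ := husedi
  obtain ⟨dj, hdj, hdj'⟩ := husedj
  have hdine : di.1 ≠ di.2 := ne_of_lt (hlt2 di hdi)
  have hdjne : dj.1 ≠ dj.2 := ne_of_lt (hlt2 dj hdj)
  have hJii' : Joined L1 c.1 ci.1 :=
    Or.inr (by rw [show (ci.1, c.1) = ci from Prod.ext_iff.2 ⟨rfl, hci2.symm⟩]; exact hci)
  have hJjj' : Joined L1 c.2 cj.1 :=
    Or.inr (by rw [show (cj.1, c.2) = cj from Prod.ext_iff.2 ⟨rfl, hcj2.symm⟩]; exact hcj)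
  have hi'j' : ci.1 ≠ cj.1 := hdisjij.1
  have hdidj : di ≠ dj := by
    intro heq
    subst heq
    refine hpart ci.1 cj.1 hJii' hJjj' ?_
    rcases hdi' with h1 | h1 <;> rcases hdj' with h2 | h2
    · exact absurd (h1.symm.trans h2) hi'j'
    · refine Or.inl ?_
      rw [show (ci.1, cj.1) = di from Prod.ext_iff.2 ⟨h1.symm, h2.symm⟩]
      exact hdi
    · refine Or.inr ?_
      rw [show (cj.1, ci.1) = di from Prod.ext_iff.2 ⟨h2.symm, h1.symm⟩]
      exact hdi
    · exact absurd (h1.symm.trans h2) hi'j'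
  have hdisjD := hO2 di hdi dj hdj hdidj
  have hmimj : di.1 ≠ dj.1 := hdisjD.1
  have hic : c.1 ≠ ci.1 := by rw [← hci2]; exact Ne.symm hcine
  have hjc : c.2 ≠ cj.1 := by rw [← hcj2]; exact Ne.symm hcjne
  have hcdj : c ≠ dj := fun heq => hc2u ⟨dj, hdj, Or.inr (congrArg Prod.snd heq).symm⟩
  have hmi_ne_c1 : di.1 ≠ c.1 := fun hh => hc1u ⟨di, hdi, Or.inl hh⟩
  have hmi_ne_c2 : di.1 ≠ c.2 := fun hh => hc2u ⟨di, hdi, Or.inl hh⟩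
  have hmj_ne_c1 : dj.1 ≠ c.1 := fun hh => hc1u ⟨dj, hdj, Or.inl hh⟩
  have hci1c2 : ci.1 ≠ c.2 := by rw [← hcj2]; exact hdisjij.2.1
  have hne1 : ∀ e ∈ L1, e.1 ≠ e.2 := fun e he => ne_of_lt (hlt1 e he)
  have hne2 : ∀ e ∈ L2, e.1 ≠ e.2 := fun e he => ne_of_lt (hlt2 e he)
  have hO2' : NoOverlap (insert c L2) := noOverlap_insert hO2 hc1u hc2u
  have hne2' : ∀ e ∈ insert c L2, e.1 ≠ e.2 := by
    intro e he
    rcases Finset.mem_insert.1 he with rfl | he'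
    · exact hcne
    · exact hne2 e he'
  have hdiOr : ci.1 = di.1 ∨ ci.1 = di.2 := by
    rcases hdi' with h | h
    · exact Or.inl h.symm
    · exact Or.inr h.symm
  have hdjOr : cj.1 = dj.1 ∨ cj.1 = dj.2 := by
    rcases hdj' with h | h
    · exact Or.inl h.symm
    · exact Or.inr h.symm
  have hmono_i : applyLayer L1 (chiv false c.1 ci.1) = chiv false c.1 ci.1 := by
    rw [← hci2]
    apply applyLayer_of_mono hO1
    intro e he h1
    by_cases he2 : e.2 = ci.2
    · exfalso
      rw [uniq_snd hO1 hci he he2, chiv_right] at h1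
      exact absurd h1 (by simp)
    by_cases he1 : e.2 = ci.1
    · exact absurd he1 fun hh => mixed_snd hO1 hci he hcine hh
    · exact chiv_other false he2 he1
  have hmono_j : applyLayer L1 (chiv false c.2 cj.1) = chiv false c.2 cj.1 := by
    rw [← hcj2]
    apply applyLayer_of_mono hO1
    intro e he h1
    by_cases he2 : e.2 = cj.2
    · exfalso
      rw [uniq_snd hO1 hcj he he2, chiv_right] at h1
      exact absurd h1 (by simp)
    by_cases he1 : e.2 = cj.1
    · exact absurd he1 fun hh => mixed_snd hO1 hcj he hcjne hh
    · exact chiv_other false he2 he1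
  have hF0 : run [L1, L2] (chiv false c.2 cj.1) = chiv false c.2 dj.1 := by
    rw [run_two, hmono_j]
    exact step_max_unused hO2 hc2u hdj hdjne hdjOr
  have hG0 : run [L1, insert c L2] (chiv false c.2 cj.1) = chiv false c.1 dj.1 := by
    rw [run_two, hmono_j]
    exact step_max_comp hO2' (Finset.mem_insert_self c L2)
      (Finset.mem_insert_of_mem hdj) hcdj hcne hdjne hdjOr
  have hFwit : run [L1, L2] (chiv false c.1 ci.1) = chiv false c.1 di.1 := by
    rw [run_two, hmono_i]
    exact step_max_unused hO2 hc1u hdi hdine hdiOr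
  have hval1 : ∀ x : Fin n → Bool, run [L1, L2] x c.1 = (x ci.1 || x ci.2) := by
    intro x
    rw [run_two, eval_id hc1u, ← hci2]
    exact eval_max hO1 hci hcine x
  have hval2 : ∀ x : Fin n → Bool, run [L1, L2] x c.2 = (x cj.1 || x cj.2) := by
    intro x
    rw [run_two, eval_id hc2u, ← hcj2]
    exact eval_max hO1 hcj hcjne x
  have hforce_i : ∀ x : Fin n → Bool, cnt false x = 2 → (x ci.1 || x ci.2) = false →
      x = chiv false c.1 ci.1 := by
    intro x hx2 hb
    rw [Bool.or_eq_false_iff] at hb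
    refine eq_chiv_of hx2 ?_ hb.1 hic
    rw [← hci2]
    exact hb.2
  have hforce_j : ∀ x : Fin n → Bool, cnt false x = 2 → (x cj.1 || x cj.2) = false →
      x = chiv false c.2 cj.1 := by
    intro x hx2 hb
    rw [Bool.or_eq_false_iff] at hb
    refine eq_chiv_of hx2 ?_ hb.1 hjc
    rw [← hcj2]
    exact hb.2
  refine endgame false π (run [L1, L2]) (run [L1, insert c L2])
    (chiv false c.2 cj.1) (chiv false c.2 dj.1) (chiv false c.1 dj.1) (chiv false c.1 di.1)
    ?_ ?_ ?_ ?_ hF0 hG0 hsub ?_ ?_ ?_ ?_ ?_ ?_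
  · intro x
    rw [run_two, cnt_applyLayer hO2 hne2, cnt_applyLayer hO1 hne1]
  · intro x
    rw [run_two, cnt_applyLayer hO2' hne2', cnt_applyLayer hO1 hne1]
  · exact cnt_chiv false hjc
  · -- hFG
    intro x hx2 hxx0
    rw [run_two, run_two]
    refine insert_noop hO2 hc1u hc2u hcne _ ?_
    intro _
    by_contra h2
    have h2' : applyLayer L1 x c.2 = false := by
      cases hv : applyLayer L1 x c.2
      · rfl
      · exact absurd hv h2
    rw [← hcj2, eval_max hO1 hcj hcjne] at h2'
    exact hxx0 (hforce_j x hx2 h2')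
  · -- hu0W
    intro x hx2 hxx0 hFx
    apply hxx0
    apply hforce_j x hx2
    rw [← hval2 x, hFx]
    exact chiv_left false c.2 dj.1
  · -- hu1W
    intro x hx2 hxx0 hFx
    have hv : (x ci.1 || x ci.2) = false := by
      rw [← hval1 x, hFx]
      exact chiv_left false c.1 dj.1
    rw [hforce_i x hx2 hv, hFwit] at hFx
    have hcf := congrFun hFx di.1
    rw [chiv_right false c.1 di.1, chiv_other false hmi_ne_c1 hmimj] at hcf
    exact absurd hcf (by simp)
  · -- hshsub
    rintro x hx2 hxx0 ⟨v, hv0, hvz⟩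
    rw [chiv_eq_iff] at hv0
    rcases hv0 with rfl | rfl
    · exfalso
      apply hxx0
      apply hforce_j x hx2
      rw [← hval2 x]
      exact hvz
    · exact ⟨dj.1, chiv_right false c.1 dj.1, hvz⟩
  · -- hwit
    refine ⟨chiv false c.1 ci.1, cnt_chiv false hic, ?_, hFwit⟩
    intro heq
    have hcf := congrFun heq c.2
    rw [chiv_other false (Ne.symm hcne) (Ne.symm hci1c2), chiv_left false c.2 cj.1] at hcf
    exact absurd hcf (by simp)
  · -- hu0'1
    exact ⟨c.1, chiv_left false c.1 dj.1, chiv_left false c.1 di.1⟩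
  · -- hu0'0
    rintro ⟨v, hv0, hv0'⟩
    rw [chiv_eq_iff] at hv0
    rcases hv0 with rfl | rfl
    · rw [chiv_other false (Ne.symm hcne) (Ne.symm hmi_ne_c2)] at hv0'
      exact absurd hv0' (by simp)
    · rw [chiv_other false hmj_ne_c1 (Ne.symm hmimj)] at hv0'
      exact absurd hv0' (by simp)

end Aux8
/-- a non-redundant two-layer network satisfying conditions
(i)-(iii) for every pair of channels unused in the second layer and not joined
in the first layer is saturated. -/
theorem saturated_of_no_patterns {n : ℕ} (L1 L2 : Layer n)
    (h1 : IsLayer L1) (h2 : IsLayer L2) (hnr : ¬ Redundant L1 L2)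
    (h : ∀ i j : Fin n, i ≠ j → ¬ usedIn L2 i → ¬ usedIn L2 j →
      ¬ Joined L1 i j →
      (usedIn L1 i ∧ usedIn L1 j) ∧
      ((MinChan L1 i ∧ MinChan L1 j) ∨ (MaxChan L1 i ∧ MaxChan L1 j)) ∧
      (∀ i' j' : Fin n, Joined L1 i i' → Joined L1 j j' → ¬ Joined L2 i' j')) :
    Saturated L1 L2 := by
  obtain ⟨hlt1, hO1⟩ := h1
  obtain ⟨hlt2, hO2⟩ := h2
  refine ⟨hnr, ?_⟩
  rintro ⟨c, π, hclt, hc1u, hc2u, hss⟩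
  have hcne : c.1 ≠ c.2 := ne_of_lt hclt
  by_cases hjoin : Joined L1 c.1 c.2
  · -- the two channels are joined in the first layer: the comparator is a no-op
    have hcL1 : c ∈ L1 := by
      rcases hjoin with hj | hj
      · rwa [Prod.mk.eta] at hj
      · exact absurd (hlt1 _ hj) (not_lt.2 hclt.le)
    have hrun : run [L1, insert c L2] = run [L1, L2] := by
      funext x
      rw [run_two, run_two]
      refine insert_noop hO2 hc1u hc2u hcne _ ?_
      intro hp
      rw [eval_min hO1 hcL1, Bool.and_eq_true] at hp
      rw [eval_max hO1 hcL1 hcne, hp.1, hp.2]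
      rfl
    have houts : outputs [L1, insert c L2] = outputs [L1, L2] := by
      unfold outputs
      rw [hrun]
    rw [houts] at hss
    exact not_ssubset_permSet _ π hss
  · obtain ⟨⟨husei, husej⟩, hmm, hpart⟩ := h c.1 c.2 hcne hc1u hc2u hjoin
    rcases hmm with ⟨⟨ci, hci, hci1⟩, ⟨cj, hcj, hcj1⟩⟩ | ⟨⟨ci, hci, hci2⟩, ⟨cj, hcj, hcj2⟩⟩
    · -- both are min-channels
      have hcine : ci.1 ≠ ci.2 := ne_of_lt (hlt1 ci hci)
      have hcjne : cj.1 ≠ cj.2 := ne_of_lt (hlt1 cj hcj)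
      have hcicj : ci ≠ cj := fun heq => hcne (by rw [← hci1, ← hcj1, heq])
      have hdisjij := hO1 ci hci cj hcj hcicj
      have husedi : usedIn L2 ci.2 := by
        by_contra hni
        have hne : c.2 ≠ ci.2 := by rw [← hcj1]; exact Ne.symm hdisjij.2.2.1
        have hnj2 : ¬ Joined L1 c.2 ci.2 := by
          rintro (hJ | hJ)
          · have huq := uniq_fst hO1 hcj hJ (by rw [hcj1])
            have h2 : ci.2 = cj.2 := by have := congrArg Prod.snd huq; simpa using this
            exact hdisjij.2.2.2 h2
          · exact mixed_fst hO1 hci hJ hcine rfl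
        obtain ⟨⟨_, _⟩, hmm2, _⟩ := h c.2 ci.2 hne hc2u hni hnj2
        rcases hmm2 with ⟨_, ⟨e, he, he1⟩⟩ | ⟨⟨e, he, he2⟩, _⟩
        · exact mixed_fst hO1 hci he hcine he1
        · exact mixed_snd hO1 hcj he hcjne (by rw [← hcj1] at he2; exact he2)
      have husedj : usedIn L2 cj.2 := by
        by_contra hnj
        have hne : c.1 ≠ cj.2 := by rw [← hci1]; exact hdisjij.2.1
        have hnj2 : ¬ Joined L1 c.1 cj.2 := by
          rintro (hJ | hJ)
          · have huq := uniq_fst hO1 hci hJ (by rw [hci1])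
            have h2 : cj.2 = ci.2 := by have := congrArg Prod.snd huq; simpa using this
            exact hdisjij.2.2.2 h2.symm
          · exact mixed_fst hO1 hcj hJ hcjne rfl
        obtain ⟨⟨_, _⟩, hmm2, _⟩ := h c.1 cj.2 hne hc1u hnj hnj2
        rcases hmm2 with ⟨_, ⟨e, he, he1⟩⟩ | ⟨⟨e, he, he2⟩, _⟩
        · exact mixed_fst hO1 hcj he hcjne he1
        · exact mixed_snd hO1 hci he hcine (by rw [← hci1] at he2; exact he2)
      exact min_case_false hO1 hlt1 hO2 hlt2 hclt hc1u hc2u hci hcj hci1 hcj1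
        husedi husedj hpart π hss.subset
    · -- both are max-channels
      have hcine : ci.1 ≠ ci.2 := ne_of_lt (hlt1 ci hci)
      have hcjne : cj.1 ≠ cj.2 := ne_of_lt (hlt1 cj hcj)
      have hcicj : ci ≠ cj := fun heq => hcne (by rw [← hci2, ← hcj2, heq])
      have hdisjij := hO1 ci hci cj hcj hcicj
      have husedi : usedIn L2 ci.1 := by
        by_contra hni
        have hne : c.2 ≠ ci.1 := by rw [← hcj2]; exact Ne.symm hdisjij.2.1
        have hnj2 : ¬ Joined L1 c.2 ci.1 := by
          rintro (hJ | hJ)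
          · exact mixed_fst hO1 hcj hJ hcjne (by rw [hcj2])
          · have huq := uniq_fst hO1 hci hJ rfl
            have h2 : c.2 = ci.2 := by have := congrArg Prod.snd huq; simpa using this
            exact hcne (by rw [← hci2, ← h2])
        obtain ⟨⟨_, _⟩, hmm2, _⟩ := h c.2 ci.1 hne hc2u hni hnj2
        rcases hmm2 with ⟨⟨e, he, he1⟩, _⟩ | ⟨_, ⟨e, he, he2⟩⟩
        · exact mixed_fst hO1 hcj he hcjne (by rw [← hcj2] at he1; exact he1)
        · exact mixed_snd hO1 hci he hcine he2
      have husedj : usedIn L2 cj.1 := by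
        by_contra hnj
        have hne : c.1 ≠ cj.1 := by rw [← hci2]; exact hdisjij.2.2.1
        have hnj2 : ¬ Joined L1 c.1 cj.1 := by
          rintro (hJ | hJ)
          · exact mixed_fst hO1 hci hJ hcine (by rw [hci2])
          · have huq := uniq_fst hO1 hcj hJ rfl
            have h2 : c.1 = cj.2 := by have := congrArg Prod.snd huq; simpa using this
            exact hcne (by rw [h2, hcj2])
        obtain ⟨⟨_, _⟩, hmm2, _⟩ := h c.1 cj.1 hne hc1u hnj hnj2
        rcases hmm2 with ⟨⟨e, he, he1⟩, _⟩ | ⟨_, ⟨e, he, he2⟩⟩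
        · exact mixed_fst hO1 hci he hcine (by rw [← hci2] at he1; exact he1)
        · exact mixed_snd hO1 hcj he hcjne he2
      exact max_case_false hO1 hlt1 hO2 hlt2 hclt hc1u hc2u hci hcj hci2 hcj2
        husedi husedj hpart π hss.subset

end SN
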